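/- Let g : (ℝ₊)⁵ → ℝ₊ satisfy: for all Q, P, V, w, C > 0 and all S, U, τ, A > 0, g(S·Q, S⁻¹·U·A⁻¹·P, S·τ⁻¹·V, τ⁻¹·A²·w, U·C) = A · g(Q, P, V, w, C). Then there exists a function h : ℝ₊ → ℝ₊ such that for all Q, P, V, w, C > 0, g(Q, P, V, w, C) = √w · √(Q/V) · h(Q³·P²·w/(V·C²)). -/

import Mathlib

/-- Market impact with bet cost `C`, in square-root-law form: under unit invariance
and leverage neutrality, `g Q P V w C = √w * √(Q/V) * h (Q³P²w/(V C²))`, exhibiting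
the deviation from the square-root law as a multiplicative factor. -/
theorem market_impact_sqrt_deviation_bet_cost (g : ℝ → ℝ → ℝ → ℝ → ℝ → ℝ)
    (hg_pos : ∀ Q P V w C : ℝ, 0 < Q → 0 < P → 0 < V → 0 < w → 0 < C →
      0 < g Q P V w C)
    (hg_inv : ∀ Q P V w C S U τ A : ℝ, 0 < Q → 0 < P → 0 < V → 0 < w → 0 < C →
      0 < S → 0 < U → 0 < τ → 0 < A →
      g (S * Q) (S⁻¹ * U * A⁻¹ * P) (S * τ⁻¹ * V) (τ⁻¹ * A ^ 2 * w) (U * C)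
        = A * g Q P V w C) :
    ∃ h : ℝ → ℝ, (∀ z : ℝ, 0 < z → 0 < h z) ∧
      ∀ Q P V w C : ℝ, 0 < Q → 0 < P → 0 < V → 0 < w → 0 < C →
        g Q P V w C
          = Real.sqrt w * Real.sqrt (Q / V)
            * h (Q ^ 3 * P ^ 2 * w / (V * C ^ 2)) := by
  refine ⟨fun z => g 1 (Real.sqrt z) 1 1 1, ?_, ?_⟩
  · intro z hz
    exact hg_pos _ _ _ _ _ one_pos (Real.sqrt_pos.mpr hz) one_pos one_pos one_pos
  · intro Q P V w C hQ hP hV hw hC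
    set A : ℝ := Real.sqrt (V / (Q * w)) with hA
    have hApos : 0 < A := Real.sqrt_pos.mpr (by positivity)
    have hA2 : A ^ 2 = V / (Q * w) := Real.sq_sqrt (by positivity)
    have key := hg_inv Q P V w C Q⁻¹ C⁻¹ (V / Q) A hQ hP hV hw hC
      (by positivity) (by positivity) (by positivity) hApos
    have h1 : Q⁻¹ * Q = 1 := inv_mul_cancel₀ hQ.ne'
    have h2 : Q⁻¹ * (V / Q)⁻¹ * V = 1 := by field_simp
    have h3 : (V / Q)⁻¹ * A ^ 2 * w = 1 := by
      rw [hA2]; field_simp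
    have h4 : C⁻¹ * C = 1 := inv_mul_cancel₀ hC.ne'
    have h5 : Q⁻¹⁻¹ * C⁻¹ * A⁻¹ * P
        = Real.sqrt (Q ^ 3 * P ^ 2 * w / (V * C ^ 2)) := by
      have hz : Q ^ 3 * P ^ 2 * w / (V * C ^ 2) = (Q⁻¹⁻¹ * C⁻¹ * A⁻¹ * P) ^ 2 := by
        have hAne : A ≠ 0 := hApos.ne'
        have hA2' : A ^ 2 * (Q * w) = V := by
          rw [hA2]; field_simp
        field_simp
        linear_combination hA2'
      rw [hz, Real.sqrt_sq (by positivity)]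
    rw [h1, h2, h3, h4, h5] at key
    have hAinv : A⁻¹ = Real.sqrt w * Real.sqrt (Q / V) := by
      rw [hA, ← Real.sqrt_inv, ← Real.sqrt_mul hw.le]
      congr 1
      field_simp
    have := key.symm
    rw [← hAinv]
    field_simp at this ⊢
    linarith [this]
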